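/- (First order p-adic functional Welch bound, finite tight version) Let p be prime, X a d-dimensional vector space over ℚ_p, τ_1,…,τ_n ∈ X and f_1,…,f_n ∈ X* such that ∑_{j=1}^n f_j(x)τ_j = b·x for all x ∈ X for some b ∈ ℚ_p. Then |∑_{j=1}^n f_j(τ_j)|_p² ≤ |d|_p · max{ |∑_{j=1}^n f_j(τ_j)²|_p , max_{j≠k} |f_j(τ_k) f_k(τ_j)|_p }. -/
import Mathlib

open Finset IsUltrametricDist

lemma trace_smulRight_aux {R M : Type*} [CommRing R] [AddCommGroup M] [Module R M]
    [Module.Free R M] [Module.Finite R M] (f : M →ₗ[R] R) (v : M) :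
    LinearMap.trace R M (f.smulRight v) = f v := by
  have h : f.smulRight v = dualTensorHom R M M (f ⊗ₜ v) := by
    ext x; simp [dualTensorHom_apply]
  rw [h, LinearMap.trace_eq_contract_apply, contractLeft_apply]

theorem stmt_5 (p : ℕ) [Fact p.Prime]
    (X : Type*) [AddCommGroup X] [Module ℚ_[p] X] [FiniteDimensional ℚ_[p] X]
    (d : ℕ) (hd : Module.finrank ℚ_[p] X = d)
    (n : ℕ) (τ : Fin n → X) (f : Fin n → (X →ₗ[ℚ_[p]] ℚ_[p]))
    (b : ℚ_[p]) (hb : ∀ x : X, ∑ j, f j x • τ j = b • x) :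
    ‖∑ j, f j (τ j)‖ ^ 2 ≤
      ‖(d : ℚ_[p])‖ *
        max (‖∑ j, (f j (τ j)) ^ 2‖)
          (sSup {x : ℝ | ∃ j k, j ≠ k ∧ x = ‖f j (τ k) * f k (τ j)‖}) := by
  set c : ℚ_[p] := ∑ j, f j (τ j) with hc
  set T : ℚ_[p] := ∑ j, ∑ k, f j (τ k) * f k (τ j) with hT
  -- operator S
  have hS : (∑ j, (f j).smulRight (τ j)) = (b • LinearMap.id : X →ₗ[ℚ_[p]] X) := by
    ext x
    simpa using hb x
  -- trace : c = b * d
  have hcd : c = b * (d : ℚ_[p]) := by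
    have := congrArg (LinearMap.trace ℚ_[p] X) hS
    rw [map_sum, map_smul, LinearMap.trace_id, hd] at this
    simpa [trace_smulRight_aux, hc, smul_eq_mul] using this
  -- T = b * c
  have hTbc : T = b * c := by
    rw [hT, hc, Finset.mul_sum]
    rw [Finset.sum_comm]
    refine Finset.sum_congr rfl fun k _ => ?_
    have := congrArg (f k) (hb (τ k))
    simpa [map_sum, Finset.mul_sum, mul_comm] using this
  -- c^2 = d * T
  have hkey : c ^ 2 = (d : ℚ_[p]) * T := by
    rw [hTbc, hcd]; ring
  have hnorm : ‖c‖ ^ 2 = ‖(d : ℚ_[p])‖ * ‖T‖ := by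
    rw [← norm_pow, hkey, norm_mul]
  rw [hnorm]
  refine mul_le_mul_of_nonneg_left ?_ (norm_nonneg _)
  -- split T into diagonal + off-diagonal
  set M : ℝ := sSup {x : ℝ | ∃ j k, j ≠ k ∧ x = ‖f j (τ k) * f k (τ j)‖} with hM
  have hsplit : T = (∑ j, (f j (τ j)) ^ 2) + ∑ j, ∑ k ∈ Finset.univ.erase j,
      f j (τ k) * f k (τ j) := by
    rw [hT, ← Finset.sum_add_distrib]
    refine Finset.sum_congr rfl fun j _ => ?_
    rw [sq, ← Finset.add_sum_erase _ _ (Finset.mem_univ j)]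
  have hbdd : BddAbove {x : ℝ | ∃ j k, j ≠ k ∧ x = ‖f j (τ k) * f k (τ j)‖} := by
    have : {x : ℝ | ∃ j k, j ≠ k ∧ x = ‖f j (τ k) * f k (τ j)‖} =
        (fun q : Fin n × Fin n => ‖f q.1 (τ q.2) * f q.2 (τ q.1)‖) ''
          {q | q.1 ≠ q.2} := by
      ext x
      simp only [Set.mem_setOf_eq, Set.mem_image, Prod.exists]
      constructor
      · rintro ⟨j, k, h, rfl⟩; exact ⟨j, k, h, rfl⟩
      · rintro ⟨j, k, h, rfl⟩; exact ⟨j, k, h, rfl⟩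
    rw [this]
    exact (Set.toFinite _).image _ |>.bddAbove
  have hMnonneg : 0 ≤ M := by
    rcases eq_or_ne M 0 with h | h
    · exact h.ge
    · rcases Set.eq_empty_or_nonempty {x : ℝ | ∃ j k, j ≠ k ∧ x = ‖f j (τ k) * f k (τ j)‖}
        with he | ⟨x, j, k, hjk, hx⟩
      · rw [hM, he, Real.sSup_empty]
      · exact le_csSup hbdd ⟨j, k, hjk, hx⟩ |>.trans' (hx ▸ norm_nonneg _)
  have hoff : ‖∑ j, ∑ k ∈ Finset.univ.erase j, f j (τ k) * f k (τ j)‖ ≤ M := by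
    refine norm_sum_le_of_forall_le_of_nonneg hMnonneg fun j _ => ?_
    refine norm_sum_le_of_forall_le_of_nonneg hMnonneg fun k hk => ?_
    exact le_csSup hbdd ⟨j, k, (Finset.mem_erase.mp hk).1.symm, rfl⟩
  calc ‖T‖ ≤ max ‖∑ j, (f j (τ j)) ^ 2‖
        ‖∑ j, ∑ k ∈ Finset.univ.erase j, f j (τ k) * f k (τ j)‖ := by
        rw [hsplit]; exact norm_add_le_max _ _
    _ ≤ max ‖∑ j, (f j (τ j)) ^ 2‖ M := max_le_max le_rfl hoff
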